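/- Let S be a squarefree sequence of length 5 over C_2^3 (i.e., a set of 5 distinct elements of C_2^3). Then S has exactly one zero-sum subsequence of length 4. -/
import Mathlib

set_option maxRecDepth 10000 in
lemma key_stmt_6 : ∀ s ∈ (Finset.univ : Finset (ZMod 2 × ZMod 2 × ZMod 2)).powersetCard 5,
    ((s.powersetCard 4).filter (fun t => t.val.sum = 0)).card = 1 := by decide

/-- A squarefree sequence of length 5 over `C₂³` has a unique zero-sum subsequence of length 4. -/
theorem stmt_6 (S : Multiset (ZMod 2 × ZMod 2 × ZMod 2))
    (hcard : Multiset.card S = 5) (hsf : S.Nodup) :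
    ∃! T : Multiset (ZMod 2 × ZMod 2 × ZMod 2),
      T ≤ S ∧ Multiset.card T = 4 ∧ T.sum = 0 := by
  set s : Finset (ZMod 2 × ZMod 2 × ZMod 2) := ⟨S, hsf⟩ with hs
  have hmem : s ∈ (Finset.univ : Finset (ZMod 2 × ZMod 2 × ZMod 2)).powersetCard 5 := by
    rw [Finset.mem_powersetCard_univ]
    exact hcard
  have hone := key_stmt_6 s hmem
  obtain ⟨a, ha⟩ := Finset.card_eq_one.mp hone
  have hamem : a ∈ (s.powersetCard 4).filter (fun t => t.val.sum = 0) := by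
    rw [ha]; exact Finset.mem_singleton_self a
  rw [Finset.mem_filter, Finset.mem_powersetCard] at hamem
  obtain ⟨⟨hsub, hc4⟩, hsum⟩ := hamem
  refine ⟨a.val, ⟨?_, hc4, hsum⟩, ?_⟩
  · exact Finset.val_le_iff.mpr hsub
  · rintro T ⟨hTle, hTc, hTs⟩
    have hTnd : T.Nodup := Multiset.nodup_of_le hTle hsf
    set t : Finset (ZMod 2 × ZMod 2 × ZMod 2) := ⟨T, hTnd⟩ with ht
    have : t ∈ (s.powersetCard 4).filter (fun t => t.val.sum = 0) := by
      rw [Finset.mem_filter, Finset.mem_powersetCard]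
      exact ⟨⟨Finset.val_le_iff.mp hTle, hTc⟩, hTs⟩
    rw [ha, Finset.mem_singleton] at this
    exact congrArg Finset.val this
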